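/- Optimality of partially procrastinating policies for the finite-battery two-way channel: for every hard-feasible policy (p_{k,i}, δ_{k,i}) with α_1, α_2 ∈ [0,1], there exist sequences γ_{k,i} ≥ 0 and ε_{k,i} ≥ 0 such that the policy (p_{k,i}, δ'_{k,i}) with δ'_{k,i} = γ_{k,i} + ε_{k,i} is hard-feasible and partially procrastinating, i.e., for all k = 1,2, j ≠ k, and i = 1,…,N: p_{k,i} − α_j γ_{j,i} ≥ 0, γ_{1,i}·γ_{2,i} = 0, and ε_{k,i}·(E_k^max − S'_{k,i}) = 0, where S'_{k,i} = Σ_{n=1}^{i}(E_{k,n} − p_{k,n} + α_j δ'_{j,n} − δ'_{k,n}) is the battery state under the new policy. Since the transmit powers are unchanged, the supremum of the sum-throughput over partially procrastinating hard-feasible policies equals that over all hard-feasible policies. -/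

import Mathlib

noncomputable def tdump (Em1 Em2 a1 a2 u1 u2 : ℝ) : ℝ × ℝ :=
  if u1 ≤ Em1 ∧ u2 ≤ Em2 then (0, 0)
  else if Em1 < u1 ∧ u2 + a1 * (u1 - Em1) ≤ Em2 then (u1 - Em1, 0)
  else if Em2 < u2 ∧ u1 + a2 * (u2 - Em2) ≤ Em1 then (0, u2 - Em2)
  else (((u1 - Em1) + a2 * (u2 - Em2)) / (1 - a1 * a2),
        ((u2 - Em2) + a1 * (u1 - Em1)) / (1 - a1 * a2))

lemma tdump_spec (Em1 Em2 a1 a2 u1 u2 : ℝ) (hEm1 : 0 < Em1) (hEm2 : 0 < Em2)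
    (ha1 : 0 ≤ a1) (ha1' : a1 ≤ 1) (ha2 : 0 ≤ a2) (ha2' : a2 ≤ 1)
    (hu1 : 0 ≤ u1) (hu2 : 0 ≤ u2)
    (hC : a1 = 1 → a2 = 1 → u1 + u2 ≤ Em1 + Em2) :
    0 ≤ (tdump Em1 Em2 a1 a2 u1 u2).1 ∧ 0 ≤ (tdump Em1 Em2 a1 a2 u1 u2).2 ∧
      (((tdump Em1 Em2 a1 a2 u1 u2).1 = 0 ∧ (tdump Em1 Em2 a1 a2 u1 u2).2 = 0 ∧
          u1 ≤ Em1 ∧ u2 ≤ Em2) ∨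
       ((tdump Em1 Em2 a1 a2 u1 u2).2 = 0 ∧ Em1 ≤ u1 ∧
          (tdump Em1 Em2 a1 a2 u1 u2).1 = u1 - Em1 ∧ u2 + a1 * (u1 - Em1) ≤ Em2) ∨
       ((tdump Em1 Em2 a1 a2 u1 u2).1 = 0 ∧ Em2 ≤ u2 ∧
          (tdump Em1 Em2 a1 a2 u1 u2).2 = u2 - Em2 ∧ u1 + a2 * (u2 - Em2) ≤ Em1) ∨
       (u1 - (tdump Em1 Em2 a1 a2 u1 u2).1 + a2 * (tdump Em1 Em2 a1 a2 u1 u2).2 = Em1 ∧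
        u2 - (tdump Em1 Em2 a1 a2 u1 u2).2 + a1 * (tdump Em1 Em2 a1 a2 u1 u2).1 = Em2)) := by
  unfold tdump
  split_ifs with h1 h2 h3
  · exact ⟨le_refl 0, le_refl 0, Or.inl ⟨rfl, rfl, h1.1, h1.2⟩⟩
  · exact ⟨by simp; linarith [h2.1], le_refl 0,
      Or.inr (Or.inl ⟨rfl, h2.1.le, rfl, h2.2⟩)⟩
  · exact ⟨le_refl 0, by simp; linarith [h3.1],
      Or.inr (Or.inr (Or.inl ⟨rfl, h3.1.le, rfl, h3.2⟩))⟩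
  · -- O4 case
    push_neg at h1 h2 h3
    have hD : a1 * a2 < 1 := by
      by_contra hone
      push_neg at hone
      have ha1e : a1 = 1 :=
        le_antisymm ha1' (le_trans hone (mul_le_of_le_one_right ha1 ha2'))
      have ha2e : a2 = 1 := by
        rw [ha1e, one_mul] at hone
        exact le_antisymm ha2' hone
      have hsum := hC ha1e ha2e
      rcases le_or_gt u1 Em1 with h | h
      · have hu2' : Em2 < u2 := h1 h
        have := h3 hu2'
        rw [ha2e] at this
        linarith
      · have := h2 h
        rw [ha1e] at this
        linarith
    have hDpos : 0 < 1 - a1 * a2 := by linarith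
    have hA : 0 ≤ (u1 - Em1) + a2 * (u2 - Em2) := by
      rcases le_or_gt u1 Em1 with hle | hgt
      · have hu2' : Em2 < u2 := h1 hle
        have h3' := h3 hu2'
        linarith
      · have h2' := h2 hgt
        rcases le_or_gt Em2 u2 with hle2 | hgt2
        · linarith [mul_nonneg ha2 (sub_nonneg.mpr hle2)]
        · linarith [mul_le_of_le_one_left (by linarith : (0:ℝ) ≤ u1 - Em1) ha1',
            mul_le_of_le_one_left (by linarith : (0:ℝ) ≤ Em2 - u2) ha2']
    have hB : 0 ≤ (u2 - Em2) + a1 * (u1 - Em1) := by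
      rcases le_or_gt u1 Em1 with hle | hgt
      · have hu2' : Em2 < u2 := h1 hle
        have h3' := h3 hu2'
        linarith [mul_le_of_le_one_left (by linarith : (0:ℝ) ≤ Em1 - u1) ha1',
          mul_le_of_le_one_left (by linarith : (0:ℝ) ≤ u2 - Em2) ha2']
      · have h2' := h2 hgt
        linarith
    refine ⟨div_nonneg hA hDpos.le, div_nonneg hB hDpos.le, Or.inr (Or.inr (Or.inr ⟨?_, ?_⟩))⟩
    · have hne : (1 - a1 * a2) ≠ 0 := hDpos.ne'
      have e1 : a2 * ((u2 - Em2 + a1 * (u1 - Em1)) / (1 - a1 * a2))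
          - (u1 - Em1 + a2 * (u2 - Em2)) / (1 - a1 * a2) = -(u1 - Em1) := by
        rw [← mul_div_assoc, div_sub_div_same, div_eq_iff hne]; ring
      linarith
    · field_simp
      ring

noncomputable def tG2 (a2 E1 p1 s1 : ℝ) : ℝ :=
  if s1 + E1 < p1 then (p1 - s1 - E1) / a2 else 0

noncomputable def tG1 (a1 E1 E2 p1 p2 s1 s2 : ℝ) : ℝ :=
  if p1 ≤ s1 + E1 ∧ s2 + E2 < p2 then (p2 - s2 - E2) / a1 else 0

noncomputable def tU1 (a1 a2 E1 E2 p1 p2 s1 s2 : ℝ) : ℝ :=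
  s1 + E1 - p1 + a2 * tG2 a2 E1 p1 s1 - tG1 a1 E1 E2 p1 p2 s1 s2

noncomputable def tU2 (a1 a2 E1 E2 p1 p2 s1 s2 : ℝ) : ℝ :=
  s2 + E2 - p2 + a1 * tG1 a1 E1 E2 p1 p2 s1 s2 - tG2 a2 E1 p1 s1

noncomputable def tE1 (Em1 Em2 a1 a2 E1 E2 p1 p2 s1 s2 : ℝ) : ℝ :=
  (tdump Em1 Em2 a1 a2 (tU1 a1 a2 E1 E2 p1 p2 s1 s2) (tU2 a1 a2 E1 E2 p1 p2 s1 s2)).1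

noncomputable def tE2 (Em1 Em2 a1 a2 E1 E2 p1 p2 s1 s2 : ℝ) : ℝ :=
  (tdump Em1 Em2 a1 a2 (tU1 a1 a2 E1 E2 p1 p2 s1 s2) (tU2 a1 a2 E1 E2 p1 p2 s1 s2)).2

noncomputable def tN1 (Em1 Em2 a1 a2 E1 E2 p1 p2 s1 s2 : ℝ) : ℝ :=
  tU1 a1 a2 E1 E2 p1 p2 s1 s2 - tE1 Em1 Em2 a1 a2 E1 E2 p1 p2 s1 s2
    + a2 * tE2 Em1 Em2 a1 a2 E1 E2 p1 p2 s1 s2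

noncomputable def tN2 (Em1 Em2 a1 a2 E1 E2 p1 p2 s1 s2 : ℝ) : ℝ :=
  tU2 a1 a2 E1 E2 p1 p2 s1 s2 - tE2 Em1 Em2 a1 a2 E1 E2 p1 p2 s1 s2
    + a1 * tE1 Em1 Em2 a1 a2 E1 E2 p1 p2 s1 s2

set_option maxHeartbeats 1000000 in
lemma tslot_spec (Em1 Em2 a1 a2 E1 E2 p1 p2 d1 d2 S1 S2 s1 s2 : ℝ)
    (hEm1 : 0 < Em1) (hEm2 : 0 < Em2)
    (ha1 : 0 ≤ a1) (ha1' : a1 ≤ 1) (ha2 : 0 ≤ a2) (ha2' : a2 ≤ 1)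
    (hE1 : 0 ≤ E1) (hE2 : 0 ≤ E2) (hp1 : 0 ≤ p1) (hp2 : 0 ≤ p2)
    (hd1 : 0 ≤ d1) (hd2 : 0 ≤ d2)
    (hs1 : 0 ≤ s1) (hs1m : s1 ≤ Em1) (hs2 : 0 ≤ s2) (hs2m : s2 ≤ Em2)
    (hL : S1 + a2 * S2 ≤ s1 + a2 * s2) (hM : S2 + a1 * S1 ≤ s2 + a1 * s1)
    (hCs : a1 = 1 → a2 = 1 → s1 + s2 ≤ S1 + S2)
    (hS1'0 : 0 ≤ S1 + E1 - p1 + a2 * d2 - d1) (hS1'm : S1 + E1 - p1 + a2 * d2 - d1 ≤ Em1)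
    (hS2'0 : 0 ≤ S2 + E2 - p2 + a1 * d1 - d2) (hS2'm : S2 + E2 - p2 + a1 * d1 - d2 ≤ Em2) :
    0 ≤ tG1 a1 E1 E2 p1 p2 s1 s2 ∧ 0 ≤ tG2 a2 E1 p1 s1 ∧
    0 ≤ tE1 Em1 Em2 a1 a2 E1 E2 p1 p2 s1 s2 ∧ 0 ≤ tE2 Em1 Em2 a1 a2 E1 E2 p1 p2 s1 s2 ∧
    0 ≤ p1 - a2 * tG2 a2 E1 p1 s1 ∧ 0 ≤ p2 - a1 * tG1 a1 E1 E2 p1 p2 s1 s2 ∧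
    tG1 a1 E1 E2 p1 p2 s1 s2 * tG2 a2 E1 p1 s1 = 0 ∧
    tN1 Em1 Em2 a1 a2 E1 E2 p1 p2 s1 s2
      = s1 + E1 - p1 + a2 * (tG2 a2 E1 p1 s1 + tE2 Em1 Em2 a1 a2 E1 E2 p1 p2 s1 s2)
        - (tG1 a1 E1 E2 p1 p2 s1 s2 + tE1 Em1 Em2 a1 a2 E1 E2 p1 p2 s1 s2) ∧
    tN2 Em1 Em2 a1 a2 E1 E2 p1 p2 s1 s2
      = s2 + E2 - p2 + a1 * (tG1 a1 E1 E2 p1 p2 s1 s2 + tE1 Em1 Em2 a1 a2 E1 E2 p1 p2 s1 s2)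
        - (tG2 a2 E1 p1 s1 + tE2 Em1 Em2 a1 a2 E1 E2 p1 p2 s1 s2) ∧
    tE1 Em1 Em2 a1 a2 E1 E2 p1 p2 s1 s2 * (Em1 - tN1 Em1 Em2 a1 a2 E1 E2 p1 p2 s1 s2) = 0 ∧
    tE2 Em1 Em2 a1 a2 E1 E2 p1 p2 s1 s2 * (Em2 - tN2 Em1 Em2 a1 a2 E1 E2 p1 p2 s1 s2) = 0 ∧
    0 ≤ tN1 Em1 Em2 a1 a2 E1 E2 p1 p2 s1 s2 ∧ tN1 Em1 Em2 a1 a2 E1 E2 p1 p2 s1 s2 ≤ Em1 ∧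
    0 ≤ tN2 Em1 Em2 a1 a2 E1 E2 p1 p2 s1 s2 ∧ tN2 Em1 Em2 a1 a2 E1 E2 p1 p2 s1 s2 ≤ Em2 ∧
    (S1 + E1 - p1 + a2 * d2 - d1) + a2 * (S2 + E2 - p2 + a1 * d1 - d2)
      ≤ tN1 Em1 Em2 a1 a2 E1 E2 p1 p2 s1 s2 + a2 * tN2 Em1 Em2 a1 a2 E1 E2 p1 p2 s1 s2 ∧
    (S2 + E2 - p2 + a1 * d1 - d2) + a1 * (S1 + E1 - p1 + a2 * d2 - d1)
      ≤ tN2 Em1 Em2 a1 a2 E1 E2 p1 p2 s1 s2 + a1 * tN1 Em1 Em2 a1 a2 E1 E2 p1 p2 s1 s2 ∧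
    (a1 = 1 → a2 = 1 →
      tN1 Em1 Em2 a1 a2 E1 E2 p1 p2 s1 s2 + tN2 Em1 Em2 a1 a2 E1 E2 p1 p2 s1 s2
        ≤ (S1 + E1 - p1 + a2 * d2 - d1) + (S2 + E2 - p2 + a1 * d1 - d2)) := by
  have h1a : a1 * a2 ≤ 1 := le_trans (mul_le_of_le_one_right ha1 ha2') ha1'
  have hDnn : (0:ℝ) ≤ 1 - a1 * a2 := by linarith
  have hd1' : 0 ≤ (1 - a1 * a2) * d1 := mul_nonneg hDnn hd1
  have hd2' : 0 ≤ (1 - a1 * a2) * d2 := mul_nonneg hDnn hd2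
  set G1 := tG1 a1 E1 E2 p1 p2 s1 s2 with hG1d
  set G2 := tG2 a2 E1 p1 s1 with hG2d
  set U1 := tU1 a1 a2 E1 E2 p1 p2 s1 s2 with hU1d
  set U2 := tU2 a1 a2 E1 E2 p1 p2 s1 s2 with hU2d
  set Ed1 := tE1 Em1 Em2 a1 a2 E1 E2 p1 p2 s1 s2 with hEd1d
  set Ed2 := tE2 Em1 Em2 a1 a2 E1 E2 p1 p2 s1 s2 with hEd2d
  set N1 := tN1 Em1 Em2 a1 a2 E1 E2 p1 p2 s1 s2 with hN1d
  set N2 := tN2 Em1 Em2 a1 a2 E1 E2 p1 p2 s1 s2 with hN2d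
  have hU1e : U1 = s1 + E1 - p1 + a2 * G2 - G1 := rfl
  have hU2e : U2 = s2 + E2 - p2 + a1 * G1 - G2 := rfl
  have hNe1 : N1 = U1 - Ed1 + a2 * Ed2 := rfl
  have hNe2 : N2 = U2 - Ed2 + a1 * Ed1 := rfl
  have hed1 : (tdump Em1 Em2 a1 a2 U1 U2).1 = Ed1 := rfl
  have hed2 : (tdump Em1 Em2 a1 a2 U1 U2).2 = Ed2 := rfl
  have hN1iden : N1 = s1 + E1 - p1 + a2 * (G2 + Ed2) - (G1 + Ed1) := by
    rw [hNe1, hU1e]; ring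
  have hN2iden : N2 = s2 + E2 - p2 + a1 * (G1 + Ed1) - (G2 + Ed2) := by
    rw [hNe2, hU2e]; ring
  have hCgen : a1 = 1 → a2 = 1 →
      N1 + N2 ≤ (S1 + E1 - p1 + a2 * d2 - d1) + (S2 + E2 - p2 + a1 * d1 - d2) := by
    intro he1 he2
    have hc := hCs he1 he2
    rw [hN1iden, hN2iden, he1, he2]
    linarith [hc]
  by_cases hB : s1 + E1 < p1
  · -- Case B : user 1 deficit
    have hG1v : G1 = 0 := by
      rw [hG1d]; unfold tG1; rw [if_neg]
      rintro ⟨h, -⟩; exact absurd h (not_le.mpr hB)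
    have hG2v : G2 = (p1 - s1 - E1) / a2 := by
      rw [hG2d]; unfold tG2; rw [if_pos hB]
    have ha2pos : 0 < a2 := by
      rcases eq_or_lt_of_le ha2 with h0 | h0
      · exfalso
        rw [← h0] at hL hS1'0
        linarith
      · exact h0
    have hg2eq : a2 * G2 = p1 - s1 - E1 := by
      rw [hG2v]; field_simp
    have hG2nn : 0 ≤ G2 := by
      rw [hG2v]; exact div_nonneg (by linarith) ha2
    have hU1v : U1 = 0 := by rw [hU1e, hG1v]; linarith [hg2eq]
    have hU2v : U2 = s2 + E2 - p2 - G2 := by rw [hU2e, hG1v]; ring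
    have hU2nn : 0 ≤ U2 := by
      have h : 0 ≤ a2 * (s2 + E2 - p2 - G2) := by
        linarith [hL, hS1'0, mul_nonneg ha2 hS2'0, hd1', hg2eq]
      rw [hU2v]
      by_contra hc
      push_neg at hc
      linarith [h, mul_pos ha2pos (neg_pos.mpr hc)]
    have hCu : a1 = 1 → a2 = 1 → U1 + U2 ≤ Em1 + Em2 := by
      intro he1 he2
      have hc := hCs he1 he2
      rw [hU1v, hU2v]
      rw [he1] at hS2'm
      rw [he2] at hS1'm hg2eq
      linarith
    obtain ⟨hEd1nn, hEd2nn, hout⟩ := tdump_spec Em1 Em2 a1 a2 U1 U2 hEm1 hEm2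
      ha1 ha1' ha2 ha2' (le_of_eq hU1v.symm) hU2nn hCu
    simp only [hed1, hed2] at hEd1nn hEd2nn hout
    have hpg1 : 0 ≤ p1 - a2 * G2 := by linarith [hg2eq]
    have hpg2 : 0 ≤ p2 - a1 * G1 := by rw [hG1v]; simpa using hp2
    have hgg : G1 * G2 = 0 := by rw [hG1v, zero_mul]
    have hG1nn : (0:ℝ) ≤ G1 := le_of_eq hG1v.symm
    rcases hout with ⟨hz1, hz2, hub1, hub2⟩ | ⟨hz2, hge, he1v, hub⟩ |
      ⟨hz1, hge2, he2v, hub⟩ | ⟨hcap1, hcap2⟩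
    · -- B-O1
      have hN1v : N1 = 0 := by rw [hNe1, hz1, hz2, hU1v]; ring
      have hN2v : N2 = s2 + E2 - p2 - G2 := by rw [hNe2, hz1, hz2, hU2v]; ring
      have h17 : S2 + E2 - p2 + a1 * d1 - d2 + a1 * (S1 + E1 - p1 + a2 * d2 - d1)
          ≤ s2 + E2 - p2 - G2 := by
        have hMg : a2 * ((S2 + E2 - p2 + a1 * d1 - d2) + a1 * (S1 + E1 - p1 + a2 * d2 - d1))
            ≤ a2 * (s2 + E2 - p2 - G2) := by
          linarith [hL, hg2eq, hd1', mul_nonneg hDnn hS1'0]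
        exact (mul_le_mul_iff_right₀ ha2pos).mp hMg
      refine ⟨hG1nn, hG2nn, hEd1nn, hEd2nn, hpg1, hpg2, hgg, hN1iden, hN2iden,
        by rw [hz1, zero_mul], by rw [hz2, zero_mul], ?_, ?_, ?_, ?_, ?_, ?_, hCgen⟩
      · rw [hN1v]
      · rw [hN1v]; exact hEm1.le
      · rw [hN2v]; rw [hU2v] at hU2nn; linarith
      · rw [hN2v]; rw [hU2v] at hub2; linarith
      · rw [hN1v, hN2v]; linarith [hL, hd1', hg2eq]
      · rw [hN1v, hN2v]; linarith [h17]
    · -- B-O2 : impossible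
      exfalso; rw [hU1v] at hge; linarith
    · -- B-O3
      have hN1v : N1 = a2 * (U2 - Em2) := by rw [hNe1, hz1, he2v, hU1v]; ring
      have hN2v : N2 = Em2 := by rw [hNe2, hz1, he2v]; ring
      refine ⟨hG1nn, hG2nn, hEd1nn, hEd2nn, hpg1, hpg2, hgg, hN1iden, hN2iden,
        by rw [hz1, zero_mul], by rw [hN2v]; simp, ?_, ?_, ?_, ?_, ?_, ?_, hCgen⟩
      · rw [hN1v]; exact mul_nonneg ha2 (by linarith)
      · rw [hN1v]; rw [hU1v] at hub; linarith
      · rw [hN2v]; exact hEm2.le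
      · rw [hN2v]
      · rw [hN1v, hN2v, hU2v]; linarith [hL, hd1', hg2eq]
      · rw [hN1v, hN2v, hU2v]
        have ha1g2 : a1 * (a2 * G2) = a1 * (p1 - s1 - E1) := by rw [hg2eq]
        linarith [mul_nonneg hDnn (by linarith : (0:ℝ) ≤ Em2 - (S2 + E2 - p2 + a1 * d1 - d2)),
          mul_nonneg ha1 (by linarith [hL] : (0:ℝ) ≤ (s1 + a2 * s2) - (S1 + a2 * S2)),
          mul_nonneg ha1 hd1', ha1g2]
    · -- B-O4
      have hN1v : N1 = Em1 := hNe1.trans hcap1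
      have hN2v : N2 = Em2 := hNe2.trans hcap2
      refine ⟨hG1nn, hG2nn, hEd1nn, hEd2nn, hpg1, hpg2, hgg, hN1iden, hN2iden,
        by rw [hN1v]; simp, by rw [hN2v]; simp, ?_, ?_, ?_, ?_, ?_, ?_, hCgen⟩
      · rw [hN1v]; exact hEm1.le
      · rw [hN1v]
      · rw [hN2v]; exact hEm2.le
      · rw [hN2v]
      · rw [hN1v, hN2v]; linarith [hS1'm, mul_le_mul_of_nonneg_left hS2'm ha2]
      · rw [hN1v, hN2v]; linarith [hS2'm, mul_le_mul_of_nonneg_left hS1'm ha1]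
  · by_cases hD2 : s2 + E2 < p2
    · -- Case C : user 2 deficit
      have hG2v : G2 = 0 := by rw [hG2d]; unfold tG2; rw [if_neg hB]
      have hG1v : G1 = (p2 - s2 - E2) / a1 := by
        rw [hG1d]; unfold tG1; rw [if_pos ⟨not_lt.mp hB, hD2⟩]
      have ha1pos : 0 < a1 := by
        rcases eq_or_lt_of_le ha1 with h0 | h0
        · exfalso
          rw [← h0] at hM hS2'0
          linarith
        · exact h0
      have hg1eq : a1 * G1 = p2 - s2 - E2 := by rw [hG1v]; field_simp
      have hG1nn : 0 ≤ G1 := by rw [hG1v]; exact div_nonneg (by linarith) ha1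
      have hU2v : U2 = 0 := by rw [hU2e, hG2v]; linarith [hg1eq]
      have hU1v : U1 = s1 + E1 - p1 - G1 := by rw [hU1e, hG2v]; ring
      have hU1nn : 0 ≤ U1 := by
        have h : 0 ≤ a1 * (s1 + E1 - p1 - G1) := by
          linarith [hM, hS2'0, mul_nonneg ha1 hS1'0, hd2', hg1eq]
        rw [hU1v]
        by_contra hc
        push_neg at hc
        linarith [h, mul_pos ha1pos (neg_pos.mpr hc)]
      have hCu : a1 = 1 → a2 = 1 → U1 + U2 ≤ Em1 + Em2 := by
        intro he1 he2
        have hc := hCs he1 he2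
        rw [hU1v, hU2v]
        rw [he1] at hS2'm hg1eq
        rw [he2] at hS1'm
        linarith
      obtain ⟨hEd1nn, hEd2nn, hout⟩ := tdump_spec Em1 Em2 a1 a2 U1 U2 hEm1 hEm2
        ha1 ha1' ha2 ha2' hU1nn (le_of_eq hU2v.symm) hCu
      simp only [hed1, hed2] at hEd1nn hEd2nn hout
      have hpg1 : 0 ≤ p1 - a2 * G2 := by rw [hG2v]; simpa using hp1
      have hpg2 : 0 ≤ p2 - a1 * G1 := by linarith [hg1eq]
      have hgg : G1 * G2 = 0 := by rw [hG2v, mul_zero]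
      have hG2nn : (0:ℝ) ≤ G2 := le_of_eq hG2v.symm
      rcases hout with ⟨hz1, hz2, hub1, hub2⟩ | ⟨hz2, hge, he1v, hub⟩ |
        ⟨hz1, hge2, he2v, hub⟩ | ⟨hcap1, hcap2⟩
      · -- C-O1
        have hN1v : N1 = s1 + E1 - p1 - G1 := by rw [hNe1, hz1, hz2, hU1v]; ring
        have hN2v : N2 = 0 := by rw [hNe2, hz1, hz2, hU2v]; ring
        have h16 : S1 + E1 - p1 + a2 * d2 - d1 + a2 * (S2 + E2 - p2 + a1 * d1 - d2)
            ≤ s1 + E1 - p1 - G1 := by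
          have hMg : a1 * ((S1 + E1 - p1 + a2 * d2 - d1) + a2 * (S2 + E2 - p2 + a1 * d1 - d2))
              ≤ a1 * (s1 + E1 - p1 - G1) := by
            linarith [hM, hg1eq, hd2', mul_nonneg hDnn hS2'0]
          exact (mul_le_mul_iff_right₀ ha1pos).mp hMg
        refine ⟨hG1nn, hG2nn, hEd1nn, hEd2nn, hpg1, hpg2, hgg, hN1iden, hN2iden,
          by rw [hz1, zero_mul], by rw [hz2, zero_mul], ?_, ?_, ?_, ?_, ?_, ?_, hCgen⟩
        · rw [hN1v]; rw [hU1v] at hU1nn; linarith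
        · rw [hN1v]; rw [hU1v] at hub1; linarith
        · rw [hN2v]
        · rw [hN2v]; exact hEm2.le
        · rw [hN1v, hN2v]; linarith [h16]
        · rw [hN1v, hN2v]; linarith [hM, hd2', hg1eq]
      · -- C-O2
        have hN1v : N1 = Em1 := by rw [hNe1, hz2, he1v]; ring
        have hN2v : N2 = a1 * (U1 - Em1) := by rw [hNe2, hz2, he1v, hU2v]; ring
        refine ⟨hG1nn, hG2nn, hEd1nn, hEd2nn, hpg1, hpg2, hgg, hN1iden, hN2iden,
          by rw [hN1v]; simp, by rw [hz2, zero_mul], ?_, ?_, ?_, ?_, ?_, ?_, hCgen⟩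
        · rw [hN1v]; exact hEm1.le
        · rw [hN1v]
        · rw [hN2v]; exact mul_nonneg ha1 (by linarith)
        · rw [hN2v]; rw [hU2v] at hub; linarith
        · rw [hN1v, hN2v, hU1v]
          have ha2g1 : a2 * (a1 * G1) = a2 * (p2 - s2 - E2) := by rw [hg1eq]
          linarith [mul_nonneg hDnn (by linarith : (0:ℝ) ≤ Em1 - (S1 + E1 - p1 + a2 * d2 - d1)),
            mul_nonneg ha2 (by linarith [hM] : (0:ℝ) ≤ (s2 + a1 * s1) - (S2 + a1 * S1)),
            mul_nonneg ha2 hd2', ha2g1]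
        · rw [hN1v, hN2v, hU1v]; linarith [hM, hd2', hg1eq]
      · -- C-O3 : impossible
        exfalso; rw [hU2v] at hge2; linarith
      · -- C-O4
        have hN1v : N1 = Em1 := hNe1.trans hcap1
        have hN2v : N2 = Em2 := hNe2.trans hcap2
        refine ⟨hG1nn, hG2nn, hEd1nn, hEd2nn, hpg1, hpg2, hgg, hN1iden, hN2iden,
          by rw [hN1v]; simp, by rw [hN2v]; simp, ?_, ?_, ?_, ?_, ?_, ?_, hCgen⟩
        · rw [hN1v]; exact hEm1.le
        · rw [hN1v]
        · rw [hN2v]; exact hEm2.le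
        · rw [hN2v]
        · rw [hN1v, hN2v]; linarith [hS1'm, mul_le_mul_of_nonneg_left hS2'm ha2]
        · rw [hN1v, hN2v]; linarith [hS2'm, mul_le_mul_of_nonneg_left hS1'm ha1]
    · -- Case A : no deficit
      have hG2v : G2 = 0 := by rw [hG2d]; unfold tG2; rw [if_neg hB]
      have hG1v : G1 = 0 := by
        rw [hG1d]; unfold tG1; rw [if_neg]
        rintro ⟨-, h⟩; exact hD2 h
      have hU1v : U1 = s1 + E1 - p1 := by rw [hU1e, hG1v, hG2v]; ring
      have hU2v : U2 = s2 + E2 - p2 := by rw [hU2e, hG1v, hG2v]; ring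
      have hU1nn : 0 ≤ U1 := by rw [hU1v]; linarith [not_lt.mp hB]
      have hU2nn : 0 ≤ U2 := by rw [hU2v]; linarith [not_lt.mp hD2]
      have hCu : a1 = 1 → a2 = 1 → U1 + U2 ≤ Em1 + Em2 := by
        intro he1 he2
        have hc := hCs he1 he2
        rw [hU1v, hU2v]
        rw [he1] at hS2'm
        rw [he2] at hS1'm
        linarith
      obtain ⟨hEd1nn, hEd2nn, hout⟩ := tdump_spec Em1 Em2 a1 a2 U1 U2 hEm1 hEm2
        ha1 ha1' ha2 ha2' hU1nn hU2nn hCu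
      simp only [hed1, hed2] at hEd1nn hEd2nn hout
      have hpg1 : 0 ≤ p1 - a2 * G2 := by rw [hG2v]; simpa using hp1
      have hpg2 : 0 ≤ p2 - a1 * G1 := by rw [hG1v]; simpa using hp2
      have hgg : G1 * G2 = 0 := by rw [hG1v, zero_mul]
      have hG1nn : (0:ℝ) ≤ G1 := le_of_eq hG1v.symm
      have hG2nn : (0:ℝ) ≤ G2 := le_of_eq hG2v.symm
      rcases hout with ⟨hz1, hz2, hub1, hub2⟩ | ⟨hz2, hge, he1v, hub⟩ |
        ⟨hz1, hge2, he2v, hub⟩ | ⟨hcap1, hcap2⟩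
      · -- A-O1
        have hN1v : N1 = s1 + E1 - p1 := by rw [hNe1, hz1, hz2, hU1v]; ring
        have hN2v : N2 = s2 + E2 - p2 := by rw [hNe2, hz1, hz2, hU2v]; ring
        refine ⟨hG1nn, hG2nn, hEd1nn, hEd2nn, hpg1, hpg2, hgg, hN1iden, hN2iden,
          by rw [hz1, zero_mul], by rw [hz2, zero_mul], ?_, ?_, ?_, ?_, ?_, ?_, hCgen⟩
        · rw [hN1v]; rw [hU1v] at hU1nn; linarith
        · rw [hN1v]; rw [hU1v] at hub1; linarith
        · rw [hN2v]; rw [hU2v] at hU2nn; linarith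
        · rw [hN2v]; rw [hU2v] at hub2; linarith
        · rw [hN1v, hN2v]; linarith [hL, hd1']
        · rw [hN1v, hN2v]; linarith [hM, hd2']
      · -- A-O2
        have hN1v : N1 = Em1 := by rw [hNe1, hz2, he1v]; ring
        have hN2v : N2 = U2 + a1 * (U1 - Em1) := by rw [hNe2, hz2, he1v]; ring
        refine ⟨hG1nn, hG2nn, hEd1nn, hEd2nn, hpg1, hpg2, hgg, hN1iden, hN2iden,
          by rw [hN1v]; simp, by rw [hz2, zero_mul], ?_, ?_, ?_, ?_, ?_, ?_, hCgen⟩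
        · rw [hN1v]; exact hEm1.le
        · rw [hN1v]
        · rw [hN2v]; exact add_nonneg hU2nn (mul_nonneg ha1 (by linarith))
        · rw [hN2v]; exact hub
        · rw [hN1v, hN2v, hU1v, hU2v]
          linarith [mul_nonneg hDnn (by linarith : (0:ℝ) ≤ Em1 - (S1 + E1 - p1 + a2 * d2 - d1)),
            mul_nonneg ha2 (by linarith [hM] : (0:ℝ) ≤ (s2 + a1 * s1) - (S2 + a1 * S1)),
            mul_nonneg ha2 hd2']
        · rw [hN1v, hN2v, hU1v, hU2v]; linarith [hM, hd2']
      · -- A-O3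
        have hN1v : N1 = U1 + a2 * (U2 - Em2) := by rw [hNe1, hz1, he2v]; ring
        have hN2v : N2 = Em2 := by rw [hNe2, hz1, he2v]; ring
        refine ⟨hG1nn, hG2nn, hEd1nn, hEd2nn, hpg1, hpg2, hgg, hN1iden, hN2iden,
          by rw [hz1, zero_mul], by rw [hN2v]; simp, ?_, ?_, ?_, ?_, ?_, ?_, hCgen⟩
        · rw [hN1v]; exact add_nonneg hU1nn (mul_nonneg ha2 (by linarith))
        · rw [hN1v]; exact hub
        · rw [hN2v]; exact hEm2.le
        · rw [hN2v]
        · rw [hN1v, hN2v, hU1v, hU2v]; linarith [hL, hd1']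
        · rw [hN1v, hN2v, hU1v, hU2v]
          linarith [mul_nonneg hDnn (by linarith : (0:ℝ) ≤ Em2 - (S2 + E2 - p2 + a1 * d1 - d2)),
            mul_nonneg ha1 (by linarith [hL] : (0:ℝ) ≤ (s1 + a2 * s2) - (S1 + a2 * S2)),
            mul_nonneg ha1 hd1']
      · -- A-O4
        have hN1v : N1 = Em1 := hNe1.trans hcap1
        have hN2v : N2 = Em2 := hNe2.trans hcap2
        refine ⟨hG1nn, hG2nn, hEd1nn, hEd2nn, hpg1, hpg2, hgg, hN1iden, hN2iden,
          by rw [hN1v]; simp, by rw [hN2v]; simp, ?_, ?_, ?_, ?_, ?_, ?_, hCgen⟩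
        · rw [hN1v]; exact hEm1.le
        · rw [hN1v]
        · rw [hN2v]; exact hEm2.le
        · rw [hN2v]
        · rw [hN1v, hN2v]; linarith [hS1'm, mul_le_mul_of_nonneg_left hS2'm ha2]
        · rw [hN1v, hN2v]; linarith [hS2'm, mul_le_mul_of_nonneg_left hS1'm ha1]

noncomputable def ttraj (Em1 Em2 a1 a2 : ℝ) (E1 E2 p1 p2 : ℕ → ℝ) : ℕ → ℝ × ℝ
  | 0 => (0, 0)
  | i + 1 =>
      (tN1 Em1 Em2 a1 a2 (E1 i) (E2 i) (p1 i) (p2 i)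
         (ttraj Em1 Em2 a1 a2 E1 E2 p1 p2 i).1 (ttraj Em1 Em2 a1 a2 E1 E2 p1 p2 i).2,
       tN2 Em1 Em2 a1 a2 (E1 i) (E2 i) (p1 i) (p2 i)
         (ttraj Em1 Em2 a1 a2 E1 E2 p1 p2 i).1 (ttraj Em1 Em2 a1 a2 E1 E2 p1 p2 i).2)



/-- Sum-throughputs of hard-feasible policies of the finite-battery two-way channel. -/
def twcHardThroughputs (N : ℕ) (E1 E2 : ℕ → ℝ) (Em1 Em2 h1 h2 s1 s2 a1 a2 : ℝ) : Set ℝ :=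
  {t : ℝ | ∃ p1 p2 d1 d2 : ℕ → ℝ,
    (∀ i < N, 0 ≤ p1 i ∧ 0 ≤ p2 i ∧ 0 ≤ d1 i ∧ 0 ≤ d2 i) ∧
    (∀ i < N,
      (0 ≤ ∑ n ∈ Finset.range (i+1), (E1 n - p1 n + a2 * d2 n - d1 n) ∧
        ∑ n ∈ Finset.range (i+1), (E1 n - p1 n + a2 * d2 n - d1 n) ≤ Em1) ∧
      (0 ≤ ∑ n ∈ Finset.range (i+1), (E2 n - p2 n + a1 * d1 n - d2 n) ∧
        ∑ n ∈ Finset.range (i+1), (E2 n - p2 n + a1 * d1 n - d2 n) ≤ Em2)) ∧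
    t = ∑ i ∈ Finset.range N,
      (1/2 * Real.log (1 + h1 * p1 i / s2) + 1/2 * Real.log (1 + h2 * p2 i / s1))}

/-- Sum-throughputs of hard-feasible policies that are partially procrastinating. -/
def twcPartProcThroughputs (N : ℕ) (E1 E2 : ℕ → ℝ) (Em1 Em2 h1 h2 s1 s2 a1 a2 : ℝ) : Set ℝ :=
  {t : ℝ | ∃ p1 p2 g1 g2 e1 e2 : ℕ → ℝ,
    (∀ i < N, 0 ≤ p1 i ∧ 0 ≤ p2 i ∧ 0 ≤ g1 i ∧ 0 ≤ g2 i ∧ 0 ≤ e1 i ∧ 0 ≤ e2 i) ∧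
    (∀ i < N,
      (0 ≤ ∑ n ∈ Finset.range (i+1),
            (E1 n - p1 n + a2 * (g2 n + e2 n) - (g1 n + e1 n)) ∧
        ∑ n ∈ Finset.range (i+1),
            (E1 n - p1 n + a2 * (g2 n + e2 n) - (g1 n + e1 n)) ≤ Em1) ∧
      (0 ≤ ∑ n ∈ Finset.range (i+1),
            (E2 n - p2 n + a1 * (g1 n + e1 n) - (g2 n + e2 n)) ∧
        ∑ n ∈ Finset.range (i+1),
            (E2 n - p2 n + a1 * (g1 n + e1 n) - (g2 n + e2 n)) ≤ Em2)) ∧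
    (∀ i < N,
      0 ≤ p1 i - a2 * g2 i ∧ 0 ≤ p2 i - a1 * g1 i ∧
      g1 i * g2 i = 0 ∧
      e1 i * (Em1 - ∑ n ∈ Finset.range (i+1),
        (E1 n - p1 n + a2 * (g2 n + e2 n) - (g1 n + e1 n))) = 0 ∧
      e2 i * (Em2 - ∑ n ∈ Finset.range (i+1),
        (E2 n - p2 n + a1 * (g1 n + e1 n) - (g2 n + e2 n))) = 0) ∧
    t = ∑ i ∈ Finset.range N,
      (1/2 * Real.log (1 + h1 * p1 i / s2) + 1/2 * Real.log (1 + h2 * p2 i / s1))}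

set_option maxHeartbeats 1000000 in
/-- Optimality of partially procrastinating policies for the
finite-battery two-way channel: every hard-feasible policy admits a partially
procrastinating hard-feasible policy with the same transmit powers, and hence
the two classes achieve the same optimal sum-throughput. -/
theorem stmt_14
    (N : ℕ) (E1 E2 : ℕ → ℝ) (Em1 Em2 h1 h2 s1 s2 a1 a2 : ℝ)
    (hEm1 : 0 < Em1) (hEm2 : 0 < Em2)
    (hh1 : 0 < h1) (hh2 : 0 < h2) (hs1 : 0 < s1) (hs2 : 0 < s2)
    (ha1 : a1 ∈ Set.Icc (0:ℝ) 1) (ha2 : a2 ∈ Set.Icc (0:ℝ) 1)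
    (hE : ∀ i < N, 0 ≤ E1 i ∧ 0 ≤ E2 i) :
    (∀ p1 p2 d1 d2 : ℕ → ℝ,
      (∀ i < N, 0 ≤ p1 i ∧ 0 ≤ p2 i ∧ 0 ≤ d1 i ∧ 0 ≤ d2 i) →
      (∀ i < N,
        (0 ≤ ∑ n ∈ Finset.range (i+1), (E1 n - p1 n + a2 * d2 n - d1 n) ∧
          ∑ n ∈ Finset.range (i+1), (E1 n - p1 n + a2 * d2 n - d1 n) ≤ Em1) ∧
        (0 ≤ ∑ n ∈ Finset.range (i+1), (E2 n - p2 n + a1 * d1 n - d2 n) ∧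
          ∑ n ∈ Finset.range (i+1), (E2 n - p2 n + a1 * d1 n - d2 n) ≤ Em2)) →
      ∃ g1 g2 e1 e2 : ℕ → ℝ,
        (∀ i < N, 0 ≤ g1 i ∧ 0 ≤ g2 i ∧ 0 ≤ e1 i ∧ 0 ≤ e2 i) ∧
        -- the policy with transfers δ'ₖ = γₖ + εₖ is hard-feasible
        (∀ i < N,
          (0 ≤ ∑ n ∈ Finset.range (i+1),
                (E1 n - p1 n + a2 * (g2 n + e2 n) - (g1 n + e1 n)) ∧
            ∑ n ∈ Finset.range (i+1),
                (E1 n - p1 n + a2 * (g2 n + e2 n) - (g1 n + e1 n)) ≤ Em1) ∧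
          (0 ≤ ∑ n ∈ Finset.range (i+1),
                (E2 n - p2 n + a1 * (g1 n + e1 n) - (g2 n + e2 n)) ∧
            ∑ n ∈ Finset.range (i+1),
                (E2 n - p2 n + a1 * (g1 n + e1 n) - (g2 n + e2 n)) ≤ Em2)) ∧
        -- and partially procrastinating
        (∀ i < N,
          0 ≤ p1 i - a2 * g2 i ∧ 0 ≤ p2 i - a1 * g1 i ∧
          g1 i * g2 i = 0 ∧
          e1 i * (Em1 - ∑ n ∈ Finset.range (i+1),
            (E1 n - p1 n + a2 * (g2 n + e2 n) - (g1 n + e1 n))) = 0 ∧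
          e2 i * (Em2 - ∑ n ∈ Finset.range (i+1),
            (E2 n - p2 n + a1 * (g1 n + e1 n) - (g2 n + e2 n))) = 0)) ∧
    sSup (twcHardThroughputs N E1 E2 Em1 Em2 h1 h2 s1 s2 a1 a2)
      = sSup (twcPartProcThroughputs N E1 E2 Em1 Em2 h1 h2 s1 s2 a1 a2) := by
  obtain ⟨ha10, ha11⟩ := ha1
  obtain ⟨ha20, ha21⟩ := ha2
  have hmain : ∀ p1 p2 d1 d2 : ℕ → ℝ,
      (∀ i < N, 0 ≤ p1 i ∧ 0 ≤ p2 i ∧ 0 ≤ d1 i ∧ 0 ≤ d2 i) →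
      (∀ i < N,
        (0 ≤ ∑ n ∈ Finset.range (i+1), (E1 n - p1 n + a2 * d2 n - d1 n) ∧
          ∑ n ∈ Finset.range (i+1), (E1 n - p1 n + a2 * d2 n - d1 n) ≤ Em1) ∧
        (0 ≤ ∑ n ∈ Finset.range (i+1), (E2 n - p2 n + a1 * d1 n - d2 n) ∧
          ∑ n ∈ Finset.range (i+1), (E2 n - p2 n + a1 * d1 n - d2 n) ≤ Em2)) →
      ∃ g1 g2 e1 e2 : ℕ → ℝ,
        (∀ i < N, 0 ≤ g1 i ∧ 0 ≤ g2 i ∧ 0 ≤ e1 i ∧ 0 ≤ e2 i) ∧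
        (∀ i < N,
          (0 ≤ ∑ n ∈ Finset.range (i+1),
                (E1 n - p1 n + a2 * (g2 n + e2 n) - (g1 n + e1 n)) ∧
            ∑ n ∈ Finset.range (i+1),
                (E1 n - p1 n + a2 * (g2 n + e2 n) - (g1 n + e1 n)) ≤ Em1) ∧
          (0 ≤ ∑ n ∈ Finset.range (i+1),
                (E2 n - p2 n + a1 * (g1 n + e1 n) - (g2 n + e2 n)) ∧
            ∑ n ∈ Finset.range (i+1),
                (E2 n - p2 n + a1 * (g1 n + e1 n) - (g2 n + e2 n)) ≤ Em2)) ∧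
        (∀ i < N,
          0 ≤ p1 i - a2 * g2 i ∧ 0 ≤ p2 i - a1 * g1 i ∧
          g1 i * g2 i = 0 ∧
          e1 i * (Em1 - ∑ n ∈ Finset.range (i+1),
            (E1 n - p1 n + a2 * (g2 n + e2 n) - (g1 n + e1 n))) = 0 ∧
          e2 i * (Em2 - ∑ n ∈ Finset.range (i+1),
            (E2 n - p2 n + a1 * (g1 n + e1 n) - (g2 n + e2 n))) = 0) := by
    intro p1 p2 d1 d2 hpos hfeas
    set T := ttraj Em1 Em2 a1 a2 E1 E2 p1 p2 with hT
    have hT0 : T 0 = (0, 0) := rfl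
    have hTS : ∀ i, T (i+1) = (tN1 Em1 Em2 a1 a2 (E1 i) (E2 i) (p1 i) (p2 i) (T i).1 (T i).2,
        tN2 Em1 Em2 a1 a2 (E1 i) (E2 i) (p1 i) (p2 i) (T i).1 (T i).2) := fun i => rfl
    have key : ∀ i, i ≤ N →
        0 ≤ (T i).1 ∧ (T i).1 ≤ Em1 ∧ 0 ≤ (T i).2 ∧ (T i).2 ≤ Em2 ∧
        (∑ n ∈ Finset.range i, (E1 n - p1 n + a2 * d2 n - d1 n))
          + a2 * (∑ n ∈ Finset.range i, (E2 n - p2 n + a1 * d1 n - d2 n))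
          ≤ (T i).1 + a2 * (T i).2 ∧
        (∑ n ∈ Finset.range i, (E2 n - p2 n + a1 * d1 n - d2 n))
          + a1 * (∑ n ∈ Finset.range i, (E1 n - p1 n + a2 * d2 n - d1 n))
          ≤ (T i).2 + a1 * (T i).1 ∧
        (a1 = 1 → a2 = 1 → (T i).1 + (T i).2 ≤
          (∑ n ∈ Finset.range i, (E1 n - p1 n + a2 * d2 n - d1 n))
          + (∑ n ∈ Finset.range i, (E2 n - p2 n + a1 * d1 n - d2 n))) ∧
        (∑ n ∈ Finset.range i, (E1 n - p1 n
            + a2 * (tG2 a2 (E1 n) (p1 n) (T n).1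
                + tE2 Em1 Em2 a1 a2 (E1 n) (E2 n) (p1 n) (p2 n) (T n).1 (T n).2)
            - (tG1 a1 (E1 n) (E2 n) (p1 n) (p2 n) (T n).1 (T n).2
                + tE1 Em1 Em2 a1 a2 (E1 n) (E2 n) (p1 n) (p2 n) (T n).1 (T n).2))) = (T i).1 ∧
        (∑ n ∈ Finset.range i, (E2 n - p2 n
            + a1 * (tG1 a1 (E1 n) (E2 n) (p1 n) (p2 n) (T n).1 (T n).2
                + tE1 Em1 Em2 a1 a2 (E1 n) (E2 n) (p1 n) (p2 n) (T n).1 (T n).2)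
            - (tG2 a2 (E1 n) (p1 n) (T n).1
                + tE2 Em1 Em2 a1 a2 (E1 n) (E2 n) (p1 n) (p2 n) (T n).1 (T n).2))) = (T i).2 := by
      intro i
      induction i with
      | zero =>
        intro _
        rw [hT0]
        simp
        exact ⟨hEm1.le, hEm2.le⟩
      | succ i ih =>
        intro hiN
        have hiN' : i < N := hiN
        obtain ⟨hb1, hb2, hb3, hb4, hbL, hbM, hbC, hbS1, hbS2⟩ := ih (Nat.le_of_succ_le hiN)
        obtain ⟨⟨hfa, hfb⟩, ⟨hfc, hfd⟩⟩ := hfeas i hiN'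
        rw [Finset.sum_range_succ] at hfa hfb hfc hfd
        obtain ⟨hq1, hq2, hq3, hq4, hq5, hq6, hq7, hq8, hq9, hq10, hq11, hq12, hq13,
          hq14, hq15, hq16, hq17, hq18⟩ :=
          tslot_spec Em1 Em2 a1 a2 (E1 i) (E2 i) (p1 i) (p2 i) (d1 i) (d2 i)
            (∑ n ∈ Finset.range i, (E1 n - p1 n + a2 * d2 n - d1 n))
            (∑ n ∈ Finset.range i, (E2 n - p2 n + a1 * d1 n - d2 n))
            (T i).1 (T i).2 hEm1 hEm2 ha10 ha11 ha20 ha21 (hE i hiN').1 (hE i hiN').2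
            (hpos i hiN').1 (hpos i hiN').2.1 (hpos i hiN').2.2.1 (hpos i hiN').2.2.2
            hb1 hb2 hb3 hb4 hbL hbM hbC
            (by linarith) (by linarith) (by linarith) (by linarith)
        have h1s : (T (i+1)).1
            = tN1 Em1 Em2 a1 a2 (E1 i) (E2 i) (p1 i) (p2 i) (T i).1 (T i).2 := by rw [hTS i]
        have h2s : (T (i+1)).2
            = tN2 Em1 Em2 a1 a2 (E1 i) (E2 i) (p1 i) (p2 i) (T i).1 (T i).2 := by rw [hTS i]
        refine ⟨?_, ?_, ?_, ?_, ?_, ?_, ?_, ?_, ?_⟩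
        · rw [h1s]; exact hq12
        · rw [h1s]; exact hq13
        · rw [h2s]; exact hq14
        · rw [h2s]; exact hq15
        · rw [h1s, h2s, Finset.sum_range_succ, Finset.sum_range_succ]; linarith [hq16]
        · rw [h1s, h2s, Finset.sum_range_succ, Finset.sum_range_succ]; linarith [hq17]
        · intro he1 he2
          rw [h1s, h2s, Finset.sum_range_succ, Finset.sum_range_succ]
          linarith [hq18 he1 he2]
        · rw [Finset.sum_range_succ, hbS1, h1s, hq8]; ring
        · rw [Finset.sum_range_succ, hbS2, h2s, hq9]; ring
    refine ⟨fun i => tG1 a1 (E1 i) (E2 i) (p1 i) (p2 i) (T i).1 (T i).2,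
            fun i => tG2 a2 (E1 i) (p1 i) (T i).1,
            fun i => tE1 Em1 Em2 a1 a2 (E1 i) (E2 i) (p1 i) (p2 i) (T i).1 (T i).2,
            fun i => tE2 Em1 Em2 a1 a2 (E1 i) (E2 i) (p1 i) (p2 i) (T i).1 (T i).2,
            ?_, ?_, ?_⟩
    · intro i hiN
      obtain ⟨hb1, hb2, hb3, hb4, hbL, hbM, hbC, -, -⟩ := key i hiN.le
      obtain ⟨⟨hfa, hfb⟩, ⟨hfc, hfd⟩⟩ := hfeas i hiN
      rw [Finset.sum_range_succ] at hfa hfb hfc hfd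
      obtain ⟨hq1, hq2, hq3, hq4, -⟩ :=
        tslot_spec Em1 Em2 a1 a2 (E1 i) (E2 i) (p1 i) (p2 i) (d1 i) (d2 i)
          (∑ n ∈ Finset.range i, (E1 n - p1 n + a2 * d2 n - d1 n))
          (∑ n ∈ Finset.range i, (E2 n - p2 n + a1 * d1 n - d2 n))
          (T i).1 (T i).2 hEm1 hEm2 ha10 ha11 ha20 ha21 (hE i hiN).1 (hE i hiN).2
          (hpos i hiN).1 (hpos i hiN).2.1 (hpos i hiN).2.2.1 (hpos i hiN).2.2.2
          hb1 hb2 hb3 hb4 hbL hbM hbC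
          (by linarith) (by linarith) (by linarith) (by linarith)
      exact ⟨hq1, hq2, hq3, hq4⟩
    · intro i hiN
      obtain ⟨k1, k2, k3, k4, -, -, -, k8, k9⟩ := key (i+1) hiN
      exact ⟨⟨by rw [k8]; exact k1, by rw [k8]; exact k2⟩,
             ⟨by rw [k9]; exact k3, by rw [k9]; exact k4⟩⟩
    · intro i hiN
      obtain ⟨hb1, hb2, hb3, hb4, hbL, hbM, hbC, -, -⟩ := key i hiN.le
      obtain ⟨-, -, -, -, -, -, -, k8, k9⟩ := key (i+1) hiN
      obtain ⟨⟨hfa, hfb⟩, ⟨hfc, hfd⟩⟩ := hfeas i hiN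
      rw [Finset.sum_range_succ] at hfa hfb hfc hfd
      obtain ⟨-, -, -, -, hq5, hq6, hq7, -, -, hq10, hq11, -⟩ :=
        tslot_spec Em1 Em2 a1 a2 (E1 i) (E2 i) (p1 i) (p2 i) (d1 i) (d2 i)
          (∑ n ∈ Finset.range i, (E1 n - p1 n + a2 * d2 n - d1 n))
          (∑ n ∈ Finset.range i, (E2 n - p2 n + a1 * d1 n - d2 n))
          (T i).1 (T i).2 hEm1 hEm2 ha10 ha11 ha20 ha21 (hE i hiN).1 (hE i hiN).2
          (hpos i hiN).1 (hpos i hiN).2.1 (hpos i hiN).2.2.1 (hpos i hiN).2.2.2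
          hb1 hb2 hb3 hb4 hbL hbM hbC
          (by linarith) (by linarith) (by linarith) (by linarith)
      have h1s : (T (i+1)).1
          = tN1 Em1 Em2 a1 a2 (E1 i) (E2 i) (p1 i) (p2 i) (T i).1 (T i).2 := by rw [hTS i]
      have h2s : (T (i+1)).2
          = tN2 Em1 Em2 a1 a2 (E1 i) (E2 i) (p1 i) (p2 i) (T i).1 (T i).2 := by rw [hTS i]
      refine ⟨hq5, hq6, hq7, ?_, ?_⟩
      · rw [k8, h1s]; exact hq10
      · rw [k9, h2s]; exact hq11
  refine ⟨hmain, ?_⟩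
  have hset : twcHardThroughputs N E1 E2 Em1 Em2 h1 h2 s1 s2 a1 a2
      = twcPartProcThroughputs N E1 E2 Em1 Em2 h1 h2 s1 s2 a1 a2 := by
    ext t
    simp only [twcHardThroughputs, twcPartProcThroughputs, Set.mem_setOf_eq]
    constructor
    · rintro ⟨p1, p2, d1, d2, hpos, hfeas, ht⟩
      obtain ⟨g1, g2, e1, e2, hge, hfe, hpr⟩ := hmain p1 p2 d1 d2 hpos hfeas
      exact ⟨p1, p2, g1, g2, e1, e2,
        fun i hi => ⟨(hpos i hi).1, (hpos i hi).2.1, (hge i hi).1, (hge i hi).2.1,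
          (hge i hi).2.2.1, (hge i hi).2.2.2⟩, hfe, hpr, ht⟩
    · rintro ⟨p1, p2, g1, g2, e1, e2, hpos, hfeas, hpr, ht⟩
      exact ⟨p1, p2, fun n => g1 n + e1 n, fun n => g2 n + e2 n,
        fun i hi => ⟨(hpos i hi).1, (hpos i hi).2.1,
          add_nonneg (hpos i hi).2.2.1 (hpos i hi).2.2.2.2.1,
          add_nonneg (hpos i hi).2.2.2.1 (hpos i hi).2.2.2.2.2⟩, hfeas, ht⟩
  rw [hset]
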